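/- Suppose φ̄ : (Fin n → ℝ) → ℝ is continuously differentiable and satisfies the steady-state HJB equation with state cost m (continuous), i.e. for all x: ∇φ̄(x) ⬝ᵥ f(x) − (1/4)·((g x)ᵀ.mulVec (∇φ̄ x)) ⬝ᵥ (R⁻¹.mulVec ((g x)ᵀ.mulVec (∇φ̄ x))) + m(x) = 0. Let u : ℝ → (Fin p → ℝ) be continuous, let g be continuous, and let x : ℝ → (Fin n → ℝ) be continuously differentiable with x'(t) = f(x(t)) + (g (x t)).mulVec (u t) for all t. Then for every T ≥ 0, ∫₀ᵀ (‖u(t)‖²_R + m(x(t))) dt ≥ φ̄(x(0)) − φ̄(x(T)). -/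

import Mathlib

open Matrix

/-- Euclidean gradient of a scalar function on `Fin n → ℝ`:
the vector of partial derivatives. -/
noncomputable def grad {n : ℕ} (φ : (Fin n → ℝ) → ℝ) (x : Fin n → ℝ) : Fin n → ℝ :=
  fun i => fderiv ℝ φ x (Pi.single i 1)

/-- `R`-weighted squared norm `‖u‖²_R = u ⬝ᵥ R.mulVec u`. -/
def sqR {p : ℕ} (R : Matrix (Fin p) (Fin p) ℝ) (u : Fin p → ℝ) : ℝ :=
  u ⬝ᵥ R.mulVec u

lemma fderiv_eq_grad {n : ℕ} {φ : (Fin n → ℝ) → ℝ} (y v : Fin n → ℝ)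
    (h : DifferentiableAt ℝ φ y) :
    fderiv ℝ φ y v = grad φ y ⬝ᵥ v := by
  have hv : v = ∑ i, v i • (Pi.single i (1:ℝ) : Fin n → ℝ) := by
    funext j
    simp [Finset.sum_apply, Pi.single_apply]
  conv_lhs => rw [hv]
  rw [map_sum]
  simp [grad, dotProduct, mul_comm]

lemma key_ineq {p : ℕ} (R : Matrix (Fin p) (Fin p) ℝ)
    (hRsymm : R.IsSymm) (hRpd : R.PosDef) (uu v : Fin p → ℝ) :
    0 ≤ uu ⬝ᵥ R.mulVec uu + v ⬝ᵥ uu + (1/4) * (v ⬝ᵥ R⁻¹.mulVec v) := by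
  have hinv : R.mulVec (R⁻¹.mulVec v) = v := by
    rw [mulVec_mulVec, Matrix.mul_nonsing_inv _ (isUnit_iff_isUnit_det _ |>.1 hRpd.isUnit),
      one_mulVec]
  set z := uu + (1/2 : ℝ) • R⁻¹.mulVec v with hz
  have h0 := hRpd.posSemidef.dotProduct_mulVec_nonneg z
  have hRz : R.mulVec z = R.mulVec uu + (1/2 : ℝ) • v := by
    rw [hz, mulVec_add, mulVec_smul, hinv]
  have hcross : (R⁻¹.mulVec v) ⬝ᵥ R.mulVec uu = v ⬝ᵥ uu := by
    rw [dotProduct_mulVec, ← mulVec_transpose, hRsymm.eq, hinv]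
  have hc2 : (R⁻¹.mulVec v) ⬝ᵥ v = v ⬝ᵥ R⁻¹.mulVec v := dotProduct_comm _ _
  have hzz : star z ⬝ᵥ R.mulVec z
      = uu ⬝ᵥ R.mulVec uu + v ⬝ᵥ uu + (1/4) * (v ⬝ᵥ R⁻¹.mulVec v) := by
    have hstar : star z = z := rfl
    rw [hstar, hz, hRz, add_dotProduct, smul_dotProduct, dotProduct_add, dotProduct_add,
      dotProduct_smul, dotProduct_smul]
    simp only [smul_eq_mul, hcross, hc2, dotProduct_comm uu v]
    ring
  rw [hzz] at h0
  exact h0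

theorem stmt_5 {n p : ℕ}
    (f : (Fin n → ℝ) → (Fin n → ℝ))
    (g : (Fin n → ℝ) → Matrix (Fin n) (Fin p) ℝ)
    (hg : Continuous g)
    (R : Matrix (Fin p) (Fin p) ℝ)
    (hRsymm : R.IsSymm) (hRpd : R.PosDef)
    (m : (Fin n → ℝ) → ℝ) (hm : Continuous m)
    (φb : (Fin n → ℝ) → ℝ)
    (hφ : ContDiff ℝ 1 φb)
    (hHJB : ∀ x, grad φb x ⬝ᵥ f x
        - (1/4) * ((g x)ᵀ.mulVec (grad φb x) ⬝ᵥ R⁻¹.mulVec ((g x)ᵀ.mulVec (grad φb x)))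
        + m x = 0)
    (u : ℝ → (Fin p → ℝ)) (hu : Continuous u)
    (x : ℝ → (Fin n → ℝ)) (hxC1 : ContDiff ℝ 1 x)
    (hx : ∀ t, HasDerivAt x (f (x t) + (g (x t)).mulVec (u t)) t) :
    ∀ T : ℝ, 0 ≤ T →
      (∫ t in (0:ℝ)..T, (sqR R (u t) + m (x t))) ≥ φb (x 0) - φb (x T) := by
  intro T hT
  set D : ℝ → ℝ := fun t => grad φb (x t) ⬝ᵥ (f (x t) + (g (x t)).mulVec (u t)) with hD
  -- derivative of φb ∘ x
  have hderiv : ∀ t, HasDerivAt (fun s => φb (x s)) (D t) t := by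
    intro t
    have h1 := ((hφ.differentiable one_ne_zero (x t)).hasFDerivAt).comp_hasDerivAt t (hx t)
    rwa [fderiv_eq_grad _ _ (hφ.differentiable one_ne_zero (x t))] at h1
  -- continuity of grad φb
  have hgradc : Continuous (grad φb) := by
    apply continuous_pi
    intro i
    exact (ContinuousLinearMap.apply ℝ ℝ (Pi.single i (1:ℝ))).continuous.comp
      (hφ.continuous_fderiv one_ne_zero)
  -- D is continuous (rewrite via deriv x)
  have hDeq : D = fun t => grad φb (x t) ⬝ᵥ deriv x t := by
    funext t
    rw [hD, (hx t).deriv]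
  have hDc : Continuous D := by
    rw [hDeq]
    exact (hgradc.comp hxC1.continuous).dotProduct (hxC1.continuous_deriv le_rfl)
  have hFTC : (∫ t in (0:ℝ)..T, D t) = φb (x T) - φb (x 0) :=
    intervalIntegral.integral_eq_sub_of_hasDerivAt (fun t _ => hderiv t)
      (hDc.intervalIntegrable 0 T)
  -- the integrand plus D is nonneg
  have hpt : ∀ t, 0 ≤ sqR R (u t) + m (x t) + D t := by
    intro t
    set y := x t
    set v := (g y)ᵀ.mulVec (grad φb y) with hv
    have hHJ := hHJB y
    have hcross : grad φb y ⬝ᵥ (g y).mulVec (u t) = v ⬝ᵥ u t := by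
      rw [dotProduct_mulVec, ← mulVec_transpose]
    have : sqR R (u t) + m y + D t
        = u t ⬝ᵥ R.mulVec (u t) + v ⬝ᵥ u t + (1/4) * (v ⬝ᵥ R⁻¹.mulVec v) := by
      rw [hD]
      simp only [dotProduct_add, hcross]
      rw [sqR]
      have hm' : m y = (1/4) * (v ⬝ᵥ R⁻¹.mulVec v) - grad φb y ⬝ᵥ f y := by
        rw [← hv] at hHJ; linarith
      rw [hm']; simp only [y] at hcross ⊢; linarith [hcross]
    rw [this]
    exact key_ineq R hRsymm hRpd (u t) v
  -- combine
  have hint1 : IntervalIntegrable (fun t => sqR R (u t) + m (x t)) MeasureTheory.volume 0 T := by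
    apply Continuous.intervalIntegrable
    apply Continuous.add
    · have : Continuous fun t => (u t) ⬝ᵥ R.mulVec (u t) :=
        hu.dotProduct ((continuous_const.matrix_mulVec hu))
      exact this
    · exact hm.comp hxC1.continuous
  have hsum : (∫ t in (0:ℝ)..T, (sqR R (u t) + m (x t))) + (∫ t in (0:ℝ)..T, D t)
      = ∫ t in (0:ℝ)..T, (sqR R (u t) + m (x t) + D t) :=
    (intervalIntegral.integral_add hint1 (hDc.intervalIntegrable 0 T)).symm
  have hnn : 0 ≤ ∫ t in (0:ℝ)..T, (sqR R (u t) + m (x t) + D t) :=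
    intervalIntegral.integral_nonneg hT (fun t _ => hpt t)
  rw [hFTC] at hsum
  linarith [hsum, hnn]
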